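/- Let (I_i) be a sequence of nonnegative reals, q_i = (n/(n-1))^i for n ≥ 2, r_i = 2^{-i-2}R₀ with 0 < R₀ < 1, and suppose I_{i+1} ≤ C^{1/q_i} · q_i^{1/q_i} · (2 r_i^{-2})^{1/q_i} · I_i for all i ≥ 0, where C ≥ 1. Then limsup_{k→∞} I_k ≤ C' · R₀^{-2n} · I₀, where C' depends only on n and C. In particular the infinite products ∏ C^{1/q_i}, ∏ q_i^{1/q_i}, ∏ (2r_i^{-2})^{1/q_i} converge and ∑_{k=0}^∞ 1/q_k = n. -/

import Mathlib

open Filter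

/-- Moser iteration convergence lemma: with `q_i = (n/(n-1))^i` (`n ≥ 2`),
`r_i = R₀/2^{i+2}` (`0 < R₀ < 1`), `C ≥ 1`, and a nonnegative sequence `I`
satisfying `I_{i+1} ≤ C^{1/q_i}·q_i^{1/q_i}·(2r_i⁻²)^{1/q_i}·I_i`, one has
`limsup I_k ≤ C'·R₀^{-2n}·I₀` with `C' = C'(n, C)`; the relevant infinite products
converge and `∑ 1/q_k = n`. -/
theorem moser_iteration (n : ℕ) (hn : 2 ≤ n) (C : ℝ) (hC : 1 ≤ C) :
    (∑' k : ℕ, 1 / ((n : ℝ) / ((n : ℝ) - 1)) ^ k) = (n : ℝ) ∧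
    Multipliable (fun i : ℕ => C ^ (1 / ((n : ℝ) / ((n : ℝ) - 1)) ^ i)) ∧
    Multipliable (fun i : ℕ =>
      (((n : ℝ) / ((n : ℝ) - 1)) ^ i) ^ (1 / ((n : ℝ) / ((n : ℝ) - 1)) ^ i)) ∧
    (∀ R₀ : ℝ, 0 < R₀ → R₀ < 1 →
      Multipliable (fun i : ℕ =>
        (2 * ((R₀ / 2 ^ (i + 2))⁻¹) ^ 2) ^ (1 / ((n : ℝ) / ((n : ℝ) - 1)) ^ i))) ∧
    ∃ C' : ℝ, 0 < C' ∧ ∀ R₀ : ℝ, 0 < R₀ → R₀ < 1 → ∀ I : ℕ → ℝ, (∀ i, 0 ≤ I i) →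
      (∀ i : ℕ, I (i + 1) ≤
          C ^ (1 / ((n : ℝ) / ((n : ℝ) - 1)) ^ i) *
          ((((n : ℝ) / ((n : ℝ) - 1)) ^ i) ^ (1 / ((n : ℝ) / ((n : ℝ) - 1)) ^ i)) *
          ((2 * ((R₀ / 2 ^ (i + 2))⁻¹) ^ 2) ^ (1 / ((n : ℝ) / ((n : ℝ) - 1)) ^ i)) * I i) →
      limsup I atTop ≤ C' * R₀ ^ (-(2 * (n : ℝ))) * I 0 := by
  have hn2 : (2 : ℝ) ≤ (n : ℝ) := by exact_mod_cast hn
  set q : ℝ := (n : ℝ) / ((n : ℝ) - 1) with hqdef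
  have hn1 : (0 : ℝ) < (n : ℝ) - 1 := by linarith
  have hn0 : (0 : ℝ) < (n : ℝ) := by linarith
  have hq1 : 1 < q := by
    rw [hqdef, lt_div_iff₀ hn1]; linarith
  have hq0 : 0 < q := by linarith
  set s : ℝ := ((n : ℝ) - 1) / (n : ℝ) with hsdef
  have hsq : s = q⁻¹ := by
    rw [hsdef, hqdef, inv_div]
  have hs0 : 0 ≤ s := by positivity
  have hs1 : s < 1 := by
    rw [hsdef, div_lt_one hn0]; linarith
  have hrw : ∀ i : ℕ, 1 / q ^ i = s ^ i := by
    intro i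
    rw [hsq, inv_pow, one_div]
  -- part 1
  have hsum_s : Summable (fun i : ℕ => s ^ i) := summable_geometric_of_lt_one hs0 hs1
  have htsum_s : (∑' i : ℕ, s ^ i) = (n : ℝ) := by
    rw [tsum_geometric_of_lt_one hs0 hs1]
    rw [hsdef]
    field_simp
    ring
  have part1 : (∑' k : ℕ, 1 / q ^ k) = (n : ℝ) := by
    simp only [hrw]; exact htsum_s
  -- summability helpers
  have hsum_is : Summable (fun i : ℕ => (i : ℝ) * s ^ i) := by
    have := summable_pow_mul_geometric_of_norm_lt_one 1 (by rwa [Real.norm_eq_abs, abs_of_nonneg hs0])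
    simpa using this
  have hC0 : (0 : ℝ) < C := by linarith
  -- part 2
  have part2 : Multipliable (fun i : ℕ => C ^ (1 / q ^ i)) := by
    have hs : Summable (fun i : ℕ => Real.log C * s ^ i) := hsum_s.mul_left _
    refine ⟨_, (HasSum.rexp hs.hasSum).congr_fun fun i => ?_⟩
    simp only [Function.comp, hrw]
    rw [Real.rpow_def_of_pos hC0]
  -- part 3
  have part3 : Multipliable (fun i : ℕ => (q ^ i) ^ (1 / q ^ i)) := by
    have hs : Summable (fun i : ℕ => ((i : ℝ) * Real.log q) * s ^ i) := by
      have := hsum_is.mul_right (Real.log q)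
      exact this.congr fun i => by ring
    refine ⟨_, (HasSum.rexp hs.hasSum).congr_fun fun i => ?_⟩
    simp only [Function.comp, hrw]
    rw [Real.rpow_def_of_pos (pow_pos hq0 i), Real.log_pow]
  -- log identity for the radius factor
  have hLid : ∀ (R₀ : ℝ), 0 < R₀ → ∀ i : ℕ,
      Real.log (2 * ((R₀ / 2 ^ (i + 2))⁻¹) ^ 2)
        = (2 * (i : ℝ) + 5) * Real.log 2 - 2 * Real.log R₀ := by
    intro R₀ hR₀ i
    have h2 : (0:ℝ) < 2 ^ (i + 2) := by positivity
    have hx : R₀ / 2 ^ (i + 2) ≠ 0 := by positivity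
    rw [Real.log_mul (by norm_num) (by positivity), Real.log_pow, Real.log_inv,
      Real.log_div (ne_of_gt hR₀) (ne_of_gt h2), Real.log_pow]
    push_cast
    ring
  have hsumL : ∀ (R₀ : ℝ), Summable (fun i : ℕ =>
      ((2 * (i : ℝ) + 5) * Real.log 2 - 2 * Real.log R₀) * s ^ i) := by
    intro R₀
    have h1 := (hsum_is.mul_left (2 * Real.log 2))
    have h2 := hsum_s.mul_left (5 * Real.log 2 - 2 * Real.log R₀)
    exact (h1.add h2).congr fun i => by ring
  -- part 4
  have part4 : ∀ R₀ : ℝ, 0 < R₀ → R₀ < 1 →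
      Multipliable (fun i : ℕ => (2 * ((R₀ / 2 ^ (i + 2))⁻¹) ^ 2) ^ (1 / q ^ i)) := by
    intro R₀ hR₀ _
    have hs : Summable (fun i : ℕ =>
        Real.log (2 * ((R₀ / 2 ^ (i + 2))⁻¹) ^ 2) * s ^ i) := by
      refine (hsumL R₀).congr fun i => ?_
      rw [hLid R₀ hR₀ i]
    refine ⟨_, (HasSum.rexp hs.hasSum).congr_fun fun i => ?_⟩
    simp only [Function.comp, hrw]
    rw [Real.rpow_def_of_pos (by positivity)]
  -- part 5
  have hsumh : Summable (fun i : ℕ =>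
      (Real.log C + (i : ℝ) * Real.log q + (2 * (i : ℝ) + 5) * Real.log 2) * s ^ i) := by
    have h1 := hsum_is.mul_left (Real.log q + 2 * Real.log 2)
    have h2 := hsum_s.mul_left (Real.log C + 5 * Real.log 2)
    exact (h1.add h2).congr fun i => by ring
  set S : ℝ := ∑' i : ℕ,
      (Real.log C + (i : ℝ) * Real.log q + (2 * (i : ℝ) + 5) * Real.log 2) * s ^ i with hSdef
  refine ⟨part1, part2, part3, part4, Real.exp S, Real.exp_pos S, ?_⟩
  intro R₀ hR₀ hR₁ I hI hrec
  -- define g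
  set g : ℕ → ℝ := fun i =>
    (Real.log C + (i : ℝ) * Real.log q
      + Real.log (2 * ((R₀ / 2 ^ (i + 2))⁻¹) ^ 2)) * s ^ i with hgdef
  have hg_sum : Summable g := by
    have h1 := hsumh
    have h2 := hsum_s.mul_left (-2 * Real.log R₀)
    refine (h1.add h2).congr fun i => ?_
    rw [hgdef]; simp only
    rw [hLid R₀ hR₀ i]
    ring
  have hg_nonneg : ∀ i, 0 ≤ g i := by
    intro i
    have h1 : 0 ≤ Real.log C := Real.log_nonneg hC
    have h2 : 0 ≤ Real.log q := Real.log_nonneg hq1.le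
    have h3 : 0 ≤ Real.log (2 * ((R₀ / 2 ^ (i + 2))⁻¹) ^ 2) := by
      apply Real.log_nonneg
      have hx0 : (0:ℝ) < R₀ / 2 ^ (i + 2) := by positivity
      have hx1 : R₀ / 2 ^ (i + 2) < 1 := by
        rw [div_lt_one (by positivity)]
        have : (1:ℝ) ≤ 2 ^ (i + 2) := one_le_pow₀ (by norm_num)
        linarith
      have h := (one_lt_inv₀ hx0).mpr hx1
      nlinarith
    have : 0 ≤ (i : ℝ) * Real.log q := by positivity
    have : 0 ≤ s ^ i := by positivity
    rw [hgdef]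
    positivity
  -- a i = exp (g i)
  have ha : ∀ i : ℕ,
      C ^ (1 / q ^ i) * ((q ^ i) ^ (1 / q ^ i))
        * ((2 * ((R₀ / 2 ^ (i + 2))⁻¹) ^ 2) ^ (1 / q ^ i)) = Real.exp (g i) := by
    intro i
    rw [hrw, Real.rpow_def_of_pos hC0, Real.rpow_def_of_pos (pow_pos hq0 i),
      Real.rpow_def_of_pos (by positivity), ← Real.exp_add, ← Real.exp_add,
      hgdef]
    simp only [Real.log_pow]
    ring_nf
  -- induction bound
  have hIk : ∀ k : ℕ, I k ≤ Real.exp (∑ i ∈ Finset.range k, g i) * I 0 := by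
    intro k
    induction k with
    | zero => simp
    | succ k ih =>
      calc I (k + 1) ≤ _ * I k := hrec k
        _ = Real.exp (g k) * I k := by rw [ha k]
        _ ≤ Real.exp (g k) * (Real.exp (∑ i ∈ Finset.range k, g i) * I 0) := by
            exact mul_le_mul_of_nonneg_left ih (Real.exp_pos _).le
        _ = Real.exp (∑ i ∈ Finset.range (k + 1), g i) * I 0 := by
            rw [Finset.sum_range_succ, Real.exp_add]; ring
  have htsum_g : (∑' i : ℕ, g i) = S + (-2 * Real.log R₀) * (n : ℝ) := by
    have heq : g = fun i : ℕ => ((Real.log C + (i : ℝ) * Real.log q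
        + (2 * (i : ℝ) + 5) * Real.log 2) * s ^ i + (-2 * Real.log R₀) * s ^ i) := by
      funext i
      rw [hgdef]; simp only
      rw [hLid R₀ hR₀ i]; ring
    rw [heq, Summable.tsum_add hsumh (hsum_s.mul_left _), tsum_mul_left, htsum_s]
  have hbound : ∀ k, I k ≤ Real.exp S * R₀ ^ (-(2 * (n : ℝ))) * I 0 := by
    intro k
    have h1 : (∑ i ∈ Finset.range k, g i) ≤ ∑' i : ℕ, g i :=
      Summable.sum_le_tsum _ (fun i _ => hg_nonneg i) hg_sum
    have h2 : Real.exp (∑ i ∈ Finset.range k, g i) ≤ Real.exp S * R₀ ^ (-(2 * (n : ℝ))) := by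
      rw [Real.rpow_def_of_pos hR₀, ← Real.exp_add]
      apply Real.exp_le_exp.mpr
      refine h1.trans_eq ?_
      rw [htsum_g]; ring
    exact (hIk k).trans (mul_le_mul_of_nonneg_right h2 (hI 0))
  exact limsup_le_of_le (isCoboundedUnder_le_of_le atTop hI)
    (Eventually.of_forall hbound)
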